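/- For every positive integer n, the sum over k from 0 to n of (-4)^k * (n/(n+k)) * C(n+k, n-k) equals (-1)^n. -/

import Mathlib

open Finset


lemma fn_gn (n : ℕ) :
    (∑ k ∈ range (n+1), (-4:ℚ)^k * ((n+k).choose (2*k)) = (-1)^n * (2*n+1)) ∧
    (∑ k ∈ range n, (-4:ℚ)^(k+1) * ((n+k).choose (2*k+1)) = (-1)^n * (4*n)) := by
  induction n with
  | zero => simp
  | succ n ih =>
    obtain ⟨hf, hg⟩ := ih
    have hgsucc : ∑ k ∈ range (n+1), (-4:ℚ)^(k+1) * (((n+1)+k).choose (2*k+1))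
        = (-1)^(n+1) * (4*(n+1)) := by
      have key : ∀ k ∈ range (n+1), (-4:ℚ)^(k+1) * (((n+1)+k).choose (2*k+1))
          = (-4) * ((-4:ℚ)^k * ((n+k).choose (2*k))) + (-4:ℚ)^(k+1) * ((n+k).choose (2*k+1)) := by
        intro k _
        have h1 : n+1+k = (n+k)+1 := by ring
        rw [h1, Nat.choose_succ_succ]
        push_cast
        ring
      rw [Finset.sum_congr rfl key, Finset.sum_add_distrib, ← Finset.mul_sum, hf,
        Finset.sum_range_succ, hg]
      have h0 : (n+n).choose (2*n+1) = 0 := Nat.choose_eq_zero_of_lt (by omega)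
      rw [h0]
      push_cast
      ring
    refine ⟨?_, by exact_mod_cast hgsucc⟩
    rw [Finset.sum_range_succ']
    have key : ∀ k ∈ range (n+1), (-4:ℚ)^(k+1) * (((n+1)+(k+1)).choose (2*(k+1)))
        = (-4:ℚ)^(k+1) * (((n+1)+k).choose (2*k+1)) + (-4:ℚ)^(k+1) * (((n+1)+k).choose (2*k+2)) := by
      intro k _
      have h1 : n+1+(k+1) = (n+1+k)+1 := by ring
      have h2 : 2*(k+1) = (2*k+1)+1 := by ring
      rw [h1, h2, Nat.choose_succ_succ]
      push_cast
      ring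
    rw [Finset.sum_congr rfl key, Finset.sum_add_distrib, hgsucc]
    -- remaining: ∑ k ∈ range (n+1), (-4)^(k+1) * ((n+1+k).choose (2*k+2)) = f n - 1
    have hrest : ∑ k ∈ range (n+1), (-4:ℚ)^(k+1) * (((n+1)+k).choose (2*k+2))
        = (-1)^n * (2*n+1) - 1 := by
      rw [Finset.sum_range_succ]
      have h0 : (n+1+n).choose (2*n+2) = 0 := Nat.choose_eq_zero_of_lt (by omega)
      rw [h0]
      have := hf
      rw [Finset.sum_range_succ'] at this
      have key2 : ∀ k ∈ range n, (-4:ℚ)^(k+1) * ((n+(k+1)).choose (2*(k+1)))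
          = (-4:ℚ)^(k+1) * (((n+1)+k).choose (2*k+2)) := by
        intro k _
        have e1 : n+(k+1) = (n+1)+k := by omega
        have e2 : 2*(k+1) = 2*k+2 := by ring
        rw [e1, e2]
      rw [Finset.sum_congr rfl key2] at this
      simp at this
      push_cast
      linarith
    rw [hrest]
    simp
    ring


lemma frest (n : ℕ)
    (hf : ∑ k ∈ range (n+1), (-4:ℚ)^k * ((n+k).choose (2*k)) = (-1)^n * (2*n+1)) :
    ∑ k ∈ range n, (-4:ℚ)^(k+1) * (((n+1)+k).choose (2*k+2)) = (-1)^n * (2*n+1) - 1 := by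
  rw [Finset.sum_range_succ'] at hf
  have key2 : ∀ k ∈ range n, (-4:ℚ)^(k+1) * ((n+(k+1)).choose (2*(k+1)))
      = (-4:ℚ)^(k+1) * (((n+1)+k).choose (2*k+2)) := by
    intro k _
    have e1 : n+(k+1) = (n+1)+k := by omega
    have e2 : 2*(k+1) = 2*k+2 := by ring
    rw [e1, e2]
  rw [Finset.sum_congr rfl key2] at hf
  simp at hf
  linarith

private theorem stmt_4_aux (n : ℕ) (hn : 0 < n)
    (hf : ∑ k ∈ range (n+1), (-4:ℚ)^k * ((n+k).choose (2*k)) = (-1)^n * (2*n+1))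
    (hg : ∑ k ∈ range n, (-4:ℚ)^(k+1) * ((n+k).choose (2*k+1)) = (-1)^n * (4*n)) :
    ∑ k ∈ range (n + 1), (-4 : ℚ) ^ k * ((n : ℚ) / (n + k)) *
      (Nat.choose (n + k) (n - k)) = (-1 : ℚ) ^ n := by
  rw [Finset.sum_range_succ']
  push_cast
  have h0 : (-4 : ℚ) ^ 0 * ((n : ℚ) / (n + 0)) * (Nat.choose (n + 0) (n - 0)) = 1 := by
    simp
    omega
  rw [h0]
  have key : ∀ k ∈ range n, (-4 : ℚ) ^ (k+1) * ((n : ℚ) / ((n:ℚ) + ((k:ℚ)+1))) *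
      (Nat.choose (n + (k+1)) (n - (k+1)))
      = (-4:ℚ)^(k+1) * (((n+1)+k).choose (2*k+2)) - (1/2) * ((-4:ℚ)^(k+1) * ((n+k).choose (2*k+1))) := by
    intro k hk
    simp only [Finset.mem_range] at hk
    have hsym : (n + (k+1)).choose (n - (k+1)) = (n + (k+1)).choose (2*k+2) := by
      have h1 : n + (k+1) - (2*k+2) = n - (k+1) := by omega
      rw [← h1, Nat.choose_symm (by omega)]
    rw [hsym]
    have hnat : ((n+k+1 : ℕ):ℚ) * ((n+k).choose (2*k+1)) = ((n+k+1).choose (2*k+2)) * ((2*k+2 : ℕ):ℚ) := by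
      exact_mod_cast congrArg Nat.cast (Nat.add_one_mul_choose_eq (n+k) (2*k+1))
    have e1 : (n+1)+k = n+(k+1) := by omega
    rw [e1]
    have hd : (n:ℚ) + (k+1) ≠ 0 := by positivity
    have e2 : n + (k+1) = n+k+1 := by omega
    rw [e2] at *
    push_cast at hnat ⊢
    field_simp
    linear_combination hnat
  rw [Finset.sum_congr rfl key, Finset.sum_sub_distrib, ← Finset.mul_sum, hg,
    frest n hf]
  ring

theorem stmt_4 (n : ℕ) (hn : 0 < n) :
    ∑ k ∈ range (n + 1), (-4 : ℚ) ^ k * ((n : ℚ) / (n + k)) *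
      (Nat.choose (n + k) (n - k)) = (-1 : ℚ) ^ n :=
  stmt_4_aux n hn (fn_gn n).1 (fn_gn n).2
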